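/- Let Σ be a finite nonempty alphabet, n a positive integer, U, V : Fin n → Σ, D = {j : U j ≠ V j}, and l an integer with 1 ≤ l ≤ |D|. Then every adaptive randomized q-query algorithm that is a (U,V,l)-distinguisher satisfies q ≥ |D|/(3l). -/

import Mathlib

open scoped Classical

/-- A deterministic adaptive `q`-query strategy over inputs `Fin n → Γ`. -/
structure Strategy (Γ : Type*) (n q : ℕ) where
  query : (i : Fin q) → (Fin i → Γ) → Fin n
  decide : (Fin q → Γ) → Bool

/-- The answers obtained by running a strategy on input `X`. -/
noncomputable def Strategy.answers {Γ : Type*} {n q : ℕ}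
    (S : Strategy Γ n q) (X : Fin n → Γ) (i : Fin q) : Γ :=
  X (S.query i (fun j => Strategy.answers S X ⟨j.val, j.isLt.trans i.isLt⟩))
termination_by i.val

/-- A strategy accepts `X` iff its decision on the answers is `true`. -/
def Strategy.accepts {Γ : Type*} {n q : ℕ} (S : Strategy Γ n q) (X : Fin n → Γ) : Prop :=
  S.decide (S.answers X) = true

/-- Acceptance probability of an adaptive randomized algorithm (a PMF over strategies). -/
noncomputable def acceptProb {Γ : Type*} {n q : ℕ}
    (μ : PMF (Strategy Γ n q)) (X : Fin n → Γ) : ℝ :=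
  (∑' S : Strategy Γ n q, if S.accepts X then μ S else 0).toReal

/-- Normalized Hamming distance. -/
noncomputable def hdist {Γ : Type*} {n : ℕ} (X Y : Fin n → Γ) : ℝ :=
  (Finset.univ.filter fun j => X j ≠ Y j).card / n

/-- Distance from an input to a property. -/
noncomputable def distSet {Γ : Type*} {n : ℕ} (X : Fin n → Γ) (P : Set (Fin n → Γ)) : ℝ :=
  sInf ((fun Y => hdist X Y) '' P)

/-- `μ` is an `ε`-test for `P`. -/
def IsTest {Γ : Type*} {n q : ℕ} (μ : PMF (Strategy Γ n q))
    (P : Set (Fin n → Γ)) (ε : ℝ) : Prop :=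
  (∀ X ∈ P, 2/3 ≤ acceptProb μ X) ∧
  (∀ X : Fin n → Γ, ε ≤ distSet X P → acceptProb μ X ≤ 1/3)

/-- The set of indices where `U` and `V` differ. -/
noncomputable def diffSet {Γ : Type*} {n : ℕ} (U V : Fin n → Γ) : Finset (Fin n) :=
  Finset.univ.filter fun j => U j ≠ V j

/-- `patch U V A` takes the values of `U` on `A` and of `V` elsewhere. -/
def patch {Γ : Type*} {n : ℕ} (U V : Fin n → Γ) (A : Finset (Fin n)) : Fin n → Γ :=
  fun j => if j ∈ A then U j else V j

/-- `μ` is a `(U,V,l)`-distinguisher. -/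
def IsDistinguisher {Γ : Type*} {n q : ℕ} (μ : PMF (Strategy Γ n q))
    (U V : Fin n → Γ) (l : ℕ) : Prop :=
  2/3 ≤ acceptProb μ V ∧
  ∀ A : Finset (Fin n), A ⊆ diffSet U V → A.card = l →
    acceptProb μ (patch U V A) ≤ 1/3

/-- A non-adaptive randomized `q`-query algorithm is a PMF over pairs
(query positions, decision function). -/
abbrev NAStrategy (Γ : Type*) (n q : ℕ) := (Fin q → Fin n) × ((Fin q → Γ) → Bool)

/-- Acceptance probability of a non-adaptive randomized algorithm. -/
noncomputable def naAcceptProb {Γ : Type*} {n q : ℕ}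
    (μ : PMF (NAStrategy Γ n q)) (X : Fin n → Γ) : ℝ :=
  (∑' p : NAStrategy Γ n q, if p.2 (fun i => X (p.1 i)) = true then μ p else 0).toReal

/-- `μ` (non-adaptive) is a `(U,V,l)`-distinguisher. -/
def NAIsDistinguisher {Γ : Type*} {n q : ℕ} (μ : PMF (NAStrategy Γ n q))
    (U V : Fin n → Γ) (l : ℕ) : Prop :=
  2/3 ≤ naAcceptProb μ V ∧
  ∀ A : Finset (Fin n), A ⊆ diffSet U V → A.card = l →
    naAcceptProb μ (patch U V A) ≤ 1/3

/-- Probability that index `j` appears among the query positions of a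
non-adaptive algorithm. -/
noncomputable def queryProb {Γ : Type*} {n q : ℕ}
    (μ : PMF (NAStrategy Γ n q)) (j : Fin n) : ℝ :=
  (∑' p : NAStrategy Γ n q, if ∃ i : Fin q, p.1 i = j then μ p else 0).toReal

/-- The position queried at step `i` when running on input `X`. -/
noncomputable def qp {Γ : Type*} {n q : ℕ} (S : Strategy Γ n q) (X : Fin n → Γ)
    (i : Fin q) : Fin n :=
  S.query i (fun j => S.answers X ⟨j.val, j.isLt.trans i.isLt⟩)

lemma answers_eq_qp {Γ : Type*} {n q : ℕ} (S : Strategy Γ n q) (X : Fin n → Γ) (i : Fin q) :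
    S.answers X i = X (qp S X i) := by
  rw [Strategy.answers]; rfl

lemma answers_congr_aux {Γ : Type*} {n q : ℕ} (S : Strategy Γ n q) (X Y : Fin n → Γ)
    (h : ∀ i, X (qp S Y i) = Y (qp S Y i)) :
    ∀ m : ℕ, ∀ i : Fin q, i.val < m → S.answers X i = S.answers Y i := by
  intro m
  induction m with
  | zero => intro i hi; omega
  | succ m ih =>
    intro i hi
    rw [answers_eq_qp, answers_eq_qp]
    have hq : qp S X i = qp S Y i := by
      unfold qp
      congr 1
      funext j
      exact ih ⟨j.val, j.isLt.trans i.isLt⟩ (lt_of_lt_of_le j.isLt (Nat.lt_succ_iff.mp hi))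
    rw [hq, h i]

lemma answers_congr {Γ : Type*} {n q : ℕ} (S : Strategy Γ n q) (X Y : Fin n → Γ)
    (h : ∀ i, X (qp S Y i) = Y (qp S Y i)) : S.answers X = S.answers Y := by
  funext i
  exact answers_congr_aux S X Y h q i i.isLt

lemma accepts_patch_iff {Γ : Type*} {n q : ℕ} (S : Strategy Γ n q) (U V : Fin n → Γ)
    (A : Finset (Fin n)) (h : ∀ i : Fin q, qp S V i ∉ A) :
    (S.accepts (patch U V A) ↔ S.accepts V) := by
  have : S.answers (patch U V A) = S.answers V := by
    apply answers_congr
    intro i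
    simp [patch, h i]
  unfold Strategy.accepts
  rw [this]

/-- counting subsets containing a fixed element -/
lemma card_powersetCard_filter_mem {α : Type*} [DecidableEq α] (D : Finset α) (l : ℕ)
    (hl : 1 ≤ l) (j : α) (hj : j ∈ D) :
    ((D.powersetCard l).filter (fun A => j ∈ A)).card = (D.card - 1).choose (l - 1) := by
  have : ((D.powersetCard l).filter (fun A => j ∈ A)).card
      = ((D.erase j).powersetCard (l - 1)).card := by
    refine Finset.card_bij' (fun A _ => A.erase j) (fun B _ => insert j B) ?_ ?_ ?_ ?_
    · intro A hA
      simp only [Finset.mem_filter, Finset.mem_powersetCard] at hA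
      obtain ⟨⟨hsub, hcard⟩, hjA⟩ := hA
      simp only [Finset.mem_powersetCard]
      constructor
      · exact Finset.erase_subset_erase j hsub
      · rw [Finset.card_erase_of_mem hjA, hcard]
    · intro B hB
      simp only [Finset.mem_powersetCard] at hB
      obtain ⟨hsub, hcard⟩ := hB
      have hjB : j ∉ B := fun hc => (Finset.mem_erase.mp (hsub hc)).1 rfl
      simp only [Finset.mem_filter, Finset.mem_powersetCard]
      refine ⟨⟨?_, ?_⟩, Finset.mem_insert_self j B⟩
      · intro x hx
        rcases Finset.mem_insert.mp hx with h | h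
        · exact h ▸ hj
        · exact (Finset.erase_subset j D) (hsub h)
      · rw [Finset.card_insert_of_notMem hjB, hcard]
        omega
    · intro A hA
      simp only [Finset.mem_filter] at hA
      exact Finset.insert_erase hA.2
    · intro B hB
      simp only [Finset.mem_powersetCard] at hB
      have hjB : j ∉ B := fun hc => (Finset.mem_erase.mp (hB.1 hc)).1 rfl
      exact Finset.erase_insert hjB
  rw [this, Finset.card_powersetCard, Finset.card_erase_of_mem hj]

lemma hit_count_le {α : Type*} [DecidableEq α] (D Q : Finset α) (l : ℕ) (hl : 1 ≤ l) :
    ((D.powersetCard l).filter (fun A => ∃ j ∈ Q, j ∈ A)).card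
      ≤ Q.card * (D.card - 1).choose (l - 1) := by
  have hsub : (D.powersetCard l).filter (fun A => ∃ j ∈ Q, j ∈ A)
      ⊆ (Q ∩ D).biUnion (fun j => (D.powersetCard l).filter (fun A => j ∈ A)) := by
    intro A hA
    simp only [Finset.mem_filter] at hA
    obtain ⟨hA1, j, hjQ, hjA⟩ := hA
    have hAD := (Finset.mem_powersetCard.mp hA1).1
    exact Finset.mem_biUnion.mpr ⟨j, Finset.mem_inter.mpr ⟨hjQ, hAD hjA⟩,
      Finset.mem_filter.mpr ⟨hA1, hjA⟩⟩
  calc ((D.powersetCard l).filter (fun A => ∃ j ∈ Q, j ∈ A)).card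
      ≤ ((Q ∩ D).biUnion (fun j => (D.powersetCard l).filter (fun A => j ∈ A))).card :=
        Finset.card_le_card hsub
    _ ≤ ∑ j ∈ Q ∩ D, ((D.powersetCard l).filter (fun A => j ∈ A)).card :=
        Finset.card_biUnion_le
    _ = ∑ j ∈ Q ∩ D, (D.card - 1).choose (l - 1) := by
        apply Finset.sum_congr rfl
        intro j hjmem
        exact card_powersetCard_filter_mem D l hl j (Finset.mem_inter.mp hjmem).2
    _ = (Q ∩ D).card * (D.card - 1).choose (l - 1) := by
        rw [Finset.sum_const, smul_eq_mul]
    _ ≤ Q.card * (D.card - 1).choose (l - 1) := by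
        apply Nat.mul_le_mul_right
        exact Finset.card_le_card (Finset.inter_subset_left)

/-- **Lemma 10.** Any adaptive randomized `q`-query `(U,V,l)`-distinguisher satisfies
`q ≥ |D|/(3l)`, where `D = {j : U j ≠ V j}`. -/
theorem distinguisher_lower_bound {Γ : Type*} [Fintype Γ] [Nonempty Γ] {n : ℕ}
    (hn : 0 < n) (U V : Fin n → Γ) (l : ℕ) (hl : 1 ≤ l) (hlD : l ≤ (diffSet U V).card)
    (q : ℕ) (μ : PMF (Strategy Γ n q)) (hμ : IsDistinguisher μ U V l) :
    ((diffSet U V).card : ℝ) / (3 * l) ≤ q := by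
  obtain ⟨hV, hUA⟩ := hμ
  set D := diffSet U V with hD
  set 𝒜 := D.powersetCard l with h𝒜
  set C1 := (D.card - 1).choose (l - 1) with hC1
  set N := 𝒜.card with hN
  have hone : (∑' S : Strategy Γ n q, (μ S : ENNReal)) = 1 := μ.tsum_coe
  set aP : (Fin n → Γ) → ENNReal :=
    fun X => ∑' S : Strategy Γ n q, if S.accepts X then μ S else 0 with haPdef
  set hP : Finset (Fin n) → ENNReal :=
    fun A => ∑' S : Strategy Γ n q, if ∃ i : Fin q, qp S V i ∈ A then μ S else 0 with hhPdef
  have haP_le : ∀ X, aP X ≤ 1 := by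
    intro X
    rw [← hone]
    exact ENNReal.tsum_le_tsum fun S => by split <;> simp
  have hhP_le : ∀ A, hP A ≤ 1 := by
    intro A
    rw [← hone]
    exact ENNReal.tsum_le_tsum fun S => by split <;> simp
  have haP_ne : ∀ X, aP X ≠ ⊤ := fun X => ne_top_of_le_ne_top ENNReal.one_ne_top (haP_le X)
  have hhP_ne : ∀ A, hP A ≠ ⊤ := fun A => ne_top_of_le_ne_top ENNReal.one_ne_top (hhP_le A)
  have hacc : ∀ X, acceptProb μ X = (aP X).toReal := fun X => rfl
  -- key pointwise inequality
  have key : ∀ A ∈ 𝒜, acceptProb μ V ≤ acceptProb μ (patch U V A) + (hP A).toReal := by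
    intro A _
    have h1 : aP V ≤ aP (patch U V A) + hP A := by
      rw [haPdef, hhPdef, ← ENNReal.tsum_add]
      apply ENNReal.tsum_le_tsum
      intro S
      by_cases hhit : ∃ i : Fin q, qp S V i ∈ A
      · rw [if_pos hhit]
        refine le_trans ?_ (self_le_add_left _ _)
        split <;> simp
      · rw [if_neg hhit, add_zero]
        have hiff := accepts_patch_iff S U V A (not_exists.mp hhit)
        rw [if_congr hiff rfl rfl]
    calc acceptProb μ V = (aP V).toReal := hacc V
      _ ≤ (aP (patch U V A) + hP A).toReal := by
          apply ENNReal.toReal_mono _ h1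
          exact ENNReal.add_ne_top.mpr ⟨haP_ne _, hhP_ne _⟩
      _ = acceptProb μ (patch U V A) + (hP A).toReal := by
          rw [ENNReal.toReal_add (haP_ne _) (hhP_ne _), hacc]
  -- the number of A ∈ 𝒜 hit by the queries of S on V is at most q * C1
  have hQ : ∀ S : Strategy Γ n q,
      (𝒜.filter fun A => ∃ i : Fin q, qp S V i ∈ A).card ≤ q * C1 := by
    intro S
    set Q : Finset (Fin n) := Finset.image (qp S V) Finset.univ with hQdef
    have hfe : (𝒜.filter fun A => ∃ i : Fin q, qp S V i ∈ A)
        = 𝒜.filter fun A => ∃ j ∈ Q, j ∈ A := by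
      apply Finset.filter_congr
      intro A _
      constructor
      · rintro ⟨i, hi⟩
        exact ⟨qp S V i, Finset.mem_image_of_mem _ (Finset.mem_univ i), hi⟩
      · rintro ⟨j, hjQ, hjA⟩
        obtain ⟨i, _, rfl⟩ := Finset.mem_image.mp hjQ
        exact ⟨i, hjA⟩
    rw [hfe]
    calc (𝒜.filter fun A => ∃ j ∈ Q, j ∈ A).card ≤ Q.card * C1 := by convert hit_count_le D Q l hl
      _ ≤ q * C1 := by
          apply Nat.mul_le_mul_right
          calc Q.card ≤ (Finset.univ : Finset (Fin q)).card := Finset.card_image_le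
            _ = q := by simp
  -- bound the total hit probability
  have hsumhP : ∑ A ∈ 𝒜, hP A ≤ ((q * C1 : ℕ) : ENNReal) := by
    rw [hhPdef]
    rw [← Summable.tsum_finsetSum (fun A _ => ENNReal.summable)]
    calc (∑' S : Strategy Γ n q, ∑ A ∈ 𝒜, if ∃ i : Fin q, qp S V i ∈ A then (μ S : ENNReal) else 0)
        = ∑' S : Strategy Γ n q,
            (((𝒜.filter fun A => ∃ i : Fin q, qp S V i ∈ A).card : ℕ) : ENNReal) * μ S := by
          apply tsum_congr
          intro S
          rw [← Finset.sum_filter, Finset.sum_const, nsmul_eq_mul]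
      _ ≤ ∑' S : Strategy Γ n q, ((q * C1 : ℕ) : ENNReal) * μ S := by
          apply ENNReal.tsum_le_tsum
          intro S
          exact mul_le_mul_left (by exact_mod_cast Nat.cast_le.mpr (hQ S)) _
      _ = ((q * C1 : ℕ) : ENNReal) := by rw [ENNReal.tsum_mul_left, hone, mul_one]
  have hsumhPR : ∑ A ∈ 𝒜, (hP A).toReal ≤ ((q * C1 : ℕ) : ℝ) := by
    rw [← ENNReal.toReal_sum (fun A _ => hhP_ne A)]
    calc (∑ A ∈ 𝒜, hP A).toReal ≤ (((q * C1 : ℕ) : ENNReal)).toReal :=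
          ENNReal.toReal_mono (ENNReal.natCast_ne_top _) hsumhP
      _ = ((q * C1 : ℕ) : ℝ) := by simp
  -- sum the per-A inequality over 𝒜
  have hsum1 : ∑ A ∈ 𝒜, acceptProb μ (patch U V A) ≤ (N : ℝ) * (1/3) := by
    calc ∑ A ∈ 𝒜, acceptProb μ (patch U V A) ≤ ∑ _A ∈ 𝒜, (1/3 : ℝ) := by
          apply Finset.sum_le_sum
          intro A hA
          obtain ⟨hAsub, hAcard⟩ := Finset.mem_powersetCard.mp hA
          exact hUA A hAsub hAcard
      _ = (N : ℝ) * (1/3) := by rw [Finset.sum_const, nsmul_eq_mul]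
  have main : (N : ℝ) * (2/3) ≤ (N : ℝ) * (1/3) + ((q * C1 : ℕ) : ℝ) := by
    calc (N : ℝ) * (2/3) ≤ (N : ℝ) * acceptProb μ V := by
          apply mul_le_mul_of_nonneg_left hV (Nat.cast_nonneg N)
      _ = ∑ _A ∈ 𝒜, acceptProb μ V := by rw [Finset.sum_const, nsmul_eq_mul]
      _ ≤ ∑ A ∈ 𝒜, (acceptProb μ (patch U V A) + (hP A).toReal) := Finset.sum_le_sum key
      _ = ∑ A ∈ 𝒜, acceptProb μ (patch U V A) + ∑ A ∈ 𝒜, (hP A).toReal :=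
          Finset.sum_add_distrib
      _ ≤ (N : ℝ) * (1/3) + ((q * C1 : ℕ) : ℝ) := add_le_add hsum1 hsumhPR
  -- arithmetic conclusion
  have hNpos : 0 < N := by
    rw [hN, h𝒜, Finset.card_powersetCard]
    exact Nat.choose_pos hlD
  have hid : D.card * C1 = N * l := by
    have hkey := Nat.add_one_mul_choose_eq (D.card - 1) (l - 1)
    have hD1 : D.card - 1 + 1 = D.card := by omega
    have hl1 : l - 1 + 1 = l := by omega
    rw [hD1, hl1] at hkey
    rw [hC1, hkey, hN, h𝒜, Finset.card_powersetCard]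
  have hidR : (D.card : ℝ) * (C1 : ℝ) = (N : ℝ) * (l : ℝ) := by exact_mod_cast hid
  have h3 : (N : ℝ) ≤ 3 * (q : ℝ) * (C1 : ℝ) := by
    have : ((q * C1 : ℕ) : ℝ) = (q : ℝ) * (C1 : ℝ) := by push_cast; ring
    rw [this] at main
    linarith
  have h4 : (D.card : ℝ) * (N : ℝ) ≤ (q : ℝ) * (3 * (l : ℝ)) * (N : ℝ) := by
    have h5 := mul_le_mul_of_nonneg_left h3 (Nat.cast_nonneg D.card : (0:ℝ) ≤ (D.card : ℝ))
    have h6 : (D.card : ℝ) * (3 * (q : ℝ) * (C1 : ℝ)) = (q : ℝ) * (3 * (l : ℝ)) * (N : ℝ) := by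
      calc (D.card : ℝ) * (3 * (q : ℝ) * (C1 : ℝ))
          = 3 * (q : ℝ) * ((D.card : ℝ) * (C1 : ℝ)) := by ring
        _ = 3 * (q : ℝ) * ((N : ℝ) * (l : ℝ)) := by rw [hidR]
        _ = (q : ℝ) * (3 * (l : ℝ)) * (N : ℝ) := by ring
    linarith
  have h7 : (D.card : ℝ) ≤ (q : ℝ) * (3 * (l : ℝ)) := by
    have hNR : (0 : ℝ) < (N : ℝ) := by exact_mod_cast hNpos
    exact le_of_mul_le_mul_right h4 hNR
  have hlR : (1 : ℝ) ≤ (l : ℝ) := by exact_mod_cast hl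
  rw [div_le_iff₀ (by linarith : (0:ℝ) < 3 * (l : ℝ))]
  linarith
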